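/- For every deterministic automaton A over a finite alphabet Σ there exists a deterministic automaton D over Σ such that: (1) D is almost equivalent to A; (2) every deterministic automaton over Σ (with finite state type) that is almost equivalent to A has at least as many states as D; and (3) any two states of D that are almost equivalent to each other lie in the same strongly connected component of D. -/
import Mathlib


/-- The run of the deterministic automaton `M` from state `q` on the infinite
word `x`. -/
def DFA.runFrom {α σ : Type*} (M : DFA α σ) (q : σ) (x : ℕ → α) : ℕ → σ
  | 0 => q
  | n + 1 => M.step (M.runFrom q x n) (x n)

/-- State `p` of `M₁` and state `q` of `M₂` are almost equivalent: for every
infinite word, the runs from `p` and from `q` disagree on membership in the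
accepting sets only at finitely many positions. -/
def AlmostEquiv {α σ₁ σ₂ : Type*} (M₁ : DFA α σ₁) (M₂ : DFA α σ₂)
    (p : σ₁) (q : σ₂) : Prop :=
  ∀ x : ℕ → α,
    {n : ℕ | (M₁.runFrom p x n ∈ M₁.accept) ≠ (M₂.runFrom q x n ∈ M₂.accept)}.Finite

/-- `q` is reachable from `p` in `M` (possibly on the empty word). -/
def Reach {α σ : Type*} (M : DFA α σ) (p q : σ) : Prop :=
  ∃ w : List α, M.evalFrom p w = q

section Aux

variable {α : Type*}

lemma almostEquiv_symm {σ₁ σ₂ : Type*} {M₁ : DFA α σ₁} {M₂ : DFA α σ₂} {p : σ₁} {q : σ₂}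
    (h : AlmostEquiv M₁ M₂ p q) : AlmostEquiv M₂ M₁ q p := by
  intro x
  refine (h x).subset ?_
  intro n hn
  simp only [Set.mem_setOf_eq] at hn ⊢
  exact hn.symm

lemma almostEquiv_trans {σ₁ σ₂ σ₃ : Type*} {M₁ : DFA α σ₁} {M₂ : DFA α σ₂} {M₃ : DFA α σ₃}
    {p : σ₁} {q : σ₂} {r : σ₃} (h1 : AlmostEquiv M₁ M₂ p q) (h2 : AlmostEquiv M₂ M₃ q r) :
    AlmostEquiv M₁ M₃ p r := by
  intro x
  refine ((h1 x).union (h2 x)).subset ?_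
  intro n hn
  simp only [Set.mem_union, Set.mem_setOf_eq] at hn ⊢
  by_contra hc
  push_neg at hc
  exact hn (hc.1.trans hc.2)

lemma runFrom_add {σ : Type*} (M : DFA α σ) (q : σ) (x : ℕ → α) (k : ℕ) :
    ∀ m, M.runFrom q x (k + m) = M.runFrom (M.runFrom q x k) (fun i => x (k + i)) m := by
  intro m
  induction m with
  | zero => rfl
  | succ m ih =>
    show M.step (M.runFrom q x (k + m)) (x (k + m)) = _
    rw [ih]
    rfl

lemma runFrom_eq_evalFrom {σ : Type*} (M : DFA α σ) (q : σ) (x : ℕ → α) (n : ℕ) :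
    M.runFrom q x n = M.evalFrom q ((List.range n).map x) := by
  induction n with
  | zero => rfl
  | succ n ih =>
    rw [List.range_succ, List.map_append]
    show M.step (M.runFrom q x n) (x n) = _
    rw [ih]
    simp [DFA.evalFrom, List.foldl_append]

lemma reach_runFrom {σ : Type*} (M : DFA α σ) (q : σ) (x : ℕ → α) (n : ℕ) :
    Reach M q (M.runFrom q x n) :=
  ⟨(List.range n).map x, (runFrom_eq_evalFrom M q x n).symm⟩

/-- Transport of a DFA along an equivalence of state types. -/
def mapDFA {σ σ' : Type*} (M : DFA α σ) (e : σ ≃ σ') : DFA α σ' where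
  step s a := e (M.step (e.symm s) a)
  start := e M.start
  accept := {s | e.symm s ∈ M.accept}

lemma mapDFA_step {σ σ' : Type*} (M : DFA α σ) (e : σ ≃ σ') (s : σ') (a : α) :
    (mapDFA M e).step s a = e (M.step (e.symm s) a) := rfl

lemma mapDFA_mem_accept {σ σ' : Type*} (M : DFA α σ) (e : σ ≃ σ') (s : σ') :
    s ∈ (mapDFA M e).accept ↔ e.symm s ∈ M.accept := Iff.rfl

lemma mapDFA_run {σ σ' : Type*} (M : DFA α σ) (e : σ ≃ σ') (r : σ) (x : ℕ → α) (n : ℕ) :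
    (mapDFA M e).runFrom (e r) x n = e (M.runFrom r x n) := by
  induction n with
  | zero => rfl
  | succ n ih =>
    show (mapDFA M e).step ((mapDFA M e).runFrom (e r) x n) (x n) = _
    rw [ih, mapDFA_step, Equiv.symm_apply_apply]
    rfl

lemma mapDFA_almostEquiv {σ σ' : Type*} (M : DFA α σ) (e : σ ≃ σ') (r : σ) :
    AlmostEquiv M (mapDFA M e) r (e r) := by
  intro x
  refine Set.finite_empty.subset ?_
  intro n hn
  simp only [Set.mem_setOf_eq] at hn
  apply hn
  rw [mapDFA_run]
  show (M.runFrom r x n ∈ M.accept) = (e.symm (e (M.runFrom r x n)) ∈ M.accept)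
  rw [Equiv.symm_apply_apply]

/-- Merging state `p` into state `q` : delete `p`, redirecting all transitions
into `p` to go to `q` instead. -/
def mergeDFA {σ : Type*} [DecidableEq σ] (M : DFA α σ) (p q : σ) (hne : q ≠ p) :
    DFA α {x : σ // x ≠ p} where
  step r a := if h : M.step r.val a = p then ⟨q, hne⟩ else ⟨M.step r.val a, h⟩
  start := if h : M.start = p then ⟨q, hne⟩ else ⟨M.start, h⟩
  accept := {x | x.val ∈ M.accept}

lemma mergeDFA_step {σ : Type*} [DecidableEq σ] (M : DFA α σ) (p q : σ) (hne : q ≠ p)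
    (r : {x : σ // x ≠ p}) (a : α) :
    (mergeDFA M p q hne).step r a
      = if h : M.step r.val a = p then ⟨q, hne⟩ else ⟨M.step r.val a, h⟩ := rfl

lemma mergeDFA_start {σ : Type*} [DecidableEq σ] (M : DFA α σ) (p q : σ) (hne : q ≠ p) :
    (mergeDFA M p q hne).start
      = if h : M.start = p then ⟨q, hne⟩ else ⟨M.start, h⟩ := rfl

lemma mergeDFA_mem_accept {σ : Type*} [DecidableEq σ] (M : DFA α σ) (p q : σ) (hne : q ≠ p)
    (r : {x : σ // x ≠ p}) :
    r ∈ (mergeDFA M p q hne).accept ↔ r.val ∈ M.accept := Iff.rfl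

lemma mergeDFA_run_of_avoid {σ : Type*} [DecidableEq σ] (M : DFA α σ) (p q : σ) (hne : q ≠ p)
    (r : {x : σ // x ≠ p}) (x : ℕ → α) (havoid : ∀ n, M.runFrom r.val x n ≠ p) :
    ∀ n, ((mergeDFA M p q hne).runFrom r x n).val = M.runFrom r.val x n := by
  intro n
  induction n with
  | zero => rfl
  | succ n ih =>
    show ((mergeDFA M p q hne).step ((mergeDFA M p q hne).runFrom r x n) (x n)).val = _
    have hc : M.step ((mergeDFA M p q hne).runFrom r x n).val (x n) ≠ p := by
      rw [ih]
      exact havoid (n + 1)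
    rw [mergeDFA_step, dif_neg hc]
    show M.step ((mergeDFA M p q hne).runFrom r x n).val (x n) = _
    rw [ih]
    rfl

/-- Main merge lemma at the level of states: if `p ~ q` and `p` is not reachable
from `q`, then any state `r ≠ p` of `M` is almost equivalent to the
corresponding state of the merged automaton. -/
lemma mergeDFA_almostEquiv_state {σ : Type*} [DecidableEq σ] (M : DFA α σ) (p q : σ)
    (hne : q ≠ p) (hpq : AlmostEquiv M M p q) (hre : ¬ Reach M q p) (r : {x : σ // x ≠ p}) :
    AlmostEquiv M (mergeDFA M p q hne) r.val r := by
  have hq_avoid : ∀ (y : ℕ → α) (n : ℕ), M.runFrom q y n ≠ p := by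
    intro y n hc
    exact hre (hc ▸ reach_runFrom M q y n)
  intro x
  by_cases hhit : ∃ n, M.runFrom r.val x n = p
  · classical
    obtain ⟨k, hk, hmin⟩ : ∃ k, M.runFrom r.val x k = p ∧ ∀ m, m < k → M.runFrom r.val x m ≠ p :=
      ⟨Nat.find hhit, Nat.find_spec hhit, fun m hm => Nat.find_min hhit hm⟩
    have hk0 : k ≠ 0 := by
      intro h0
      rw [h0] at hk
      exact r.2 hk
    -- before time k the runs agree
    have pre : ∀ m, m < k → ((mergeDFA M p q hne).runFrom r x m).val = M.runFrom r.val x m := by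
      intro m
      induction m with
      | zero => intro _; rfl
      | succ m ih =>
        intro hm
        have h1 := ih (Nat.lt_of_succ_lt hm)
        show ((mergeDFA M p q hne).step ((mergeDFA M p q hne).runFrom r x m) (x m)).val = _
        have hc : M.step ((mergeDFA M p q hne).runFrom r x m).val (x m) ≠ p := by
          rw [h1]
          exact hmin (m + 1) hm
        rw [mergeDFA_step, dif_neg hc]
        show M.step ((mergeDFA M p q hne).runFrom r x m).val (x m) = _
        rw [h1]
        rfl
    -- at time k the merged run is at q
    obtain ⟨j, rfl⟩ : ∃ j, k = j + 1 := Nat.exists_eq_succ_of_ne_zero hk0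
    have hatk : (mergeDFA M p q hne).runFrom r x (j + 1) = ⟨q, hne⟩ := by
      show (mergeDFA M p q hne).step ((mergeDFA M p q hne).runFrom r x j) (x j) = _
      have hc : M.step ((mergeDFA M p q hne).runFrom r x j).val (x j) = p := by
        rw [pre j (Nat.lt_succ_self j)]
        exact hk
      rw [mergeDFA_step, dif_pos hc]
    -- after time k the merged run follows the run of M from q
    have post : ∀ m, ((mergeDFA M p q hne).runFrom r x ((j + 1) + m)).val
        = M.runFrom q (fun i => x ((j + 1) + i)) m := by
      intro m
      rw [runFrom_add, hatk]
      exact mergeDFA_run_of_avoid M p q hne ⟨q, hne⟩ _ (hq_avoid _) m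
    have postM : ∀ m, M.runFrom r.val x ((j + 1) + m)
        = M.runFrom p (fun i => x ((j + 1) + i)) m := by
      intro m
      rw [runFrom_add, hk]
    have hS := hpq (fun i => x ((j + 1) + i))
    refine (hS.image (fun m => (j + 1) + m)).subset ?_
    intro n hn
    simp only [Set.mem_setOf_eq] at hn
    rcases lt_or_ge n (j + 1) with hlt | hge
    · exfalso
      apply hn
      show (M.runFrom r.val x n ∈ M.accept) = (((mergeDFA M p q hne).runFrom r x n).val ∈ M.accept)
      rw [pre n hlt]
    · obtain ⟨m, rfl⟩ := Nat.exists_eq_add_of_le hge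
      refine Set.mem_image_of_mem _ ?_
      simp only [Set.mem_setOf_eq]
      intro hc
      apply hn
      show (M.runFrom r.val x ((j + 1) + m) ∈ M.accept)
        = (((mergeDFA M p q hne).runFrom r x ((j + 1) + m)).val ∈ M.accept)
      rw [post m, postM m]
      exact hc
  · push_neg at hhit
    refine Set.finite_empty.subset ?_
    intro n hn
    simp only [Set.mem_setOf_eq] at hn
    apply hn
    show (M.runFrom r.val x n ∈ M.accept) = (((mergeDFA M p q hne).runFrom r x n).val ∈ M.accept)
    rw [mergeDFA_run_of_avoid M p q hne r x hhit n]

lemma mergeDFA_almostEquiv {σ : Type*} [DecidableEq σ] (M : DFA α σ) (p q : σ) (hne : q ≠ p)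
    (hpq : AlmostEquiv M M p q) (hre : ¬ Reach M q p) :
    AlmostEquiv M (mergeDFA M p q hne) M.start (mergeDFA M p q hne).start := by
  by_cases hs : M.start = p
  · have hstart : (mergeDFA M p q hne).start = ⟨q, hne⟩ := by
      rw [mergeDFA_start, dif_pos hs]
    rw [hstart, hs]
    exact almostEquiv_trans hpq (mergeDFA_almostEquiv_state M p q hne hpq hre ⟨q, hne⟩)
  · have hstart : (mergeDFA M p q hne).start = ⟨M.start, hs⟩ := by
      rw [mergeDFA_start, dif_neg hs]
    rw [hstart]
    exact mergeDFA_almostEquiv_state M p q hne hpq hre ⟨M.start, hs⟩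

end Aux

theorem exists_minimal_almostEquiv {α σ : Type} [Fintype α] [Fintype σ]
    (A : DFA α σ) :
    ∃ (σD : Type) (_ : Fintype σD) (D : DFA α σD),
      AlmostEquiv A D A.start D.start ∧
      (∀ (σE : Type) (_ : Fintype σE) (E : DFA α σE),
        AlmostEquiv A E A.start E.start → Fintype.card σD ≤ Fintype.card σE) ∧
      (∀ s t : σD, AlmostEquiv D D s t → Reach D s t ∧ Reach D t s) := by
  classical
  have hP : ∃ n : ℕ, ∃ D : DFA α (Fin n), AlmostEquiv A D A.start D.start :=
    ⟨Fintype.card σ, mapDFA A (Fintype.equivFin σ), mapDFA_almostEquiv A (Fintype.equivFin σ) A.start⟩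
  obtain ⟨D, hD⟩ := Nat.find_spec hP
  -- minimality forces mutual reachability of almost equivalent states
  have key : ∀ s t : Fin (Nat.find hP), AlmostEquiv D D s t → s ≠ t → Reach D s t := by
    intro s t hst hne
    by_contra hre
    -- merge t into s
    have hD' := mergeDFA_almostEquiv D t s hne (almostEquiv_symm hst) hre
    have hAD' := almostEquiv_trans hD hD'
    have hcard : Fintype.card {x : Fin (Nat.find hP) // x ≠ t} = Nat.find hP - 1 := by
      rw [Fintype.card_subtype_compl fun x => x = t]
      simp
    set e := Fintype.equivFin {x : Fin (Nat.find hP) // x ≠ t}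
    have hAD'' := almostEquiv_trans hAD' (mapDFA_almostEquiv (mergeDFA D t s hne) e
      (mergeDFA D t s hne).start)
    have hsmall : ∃ D' : DFA α (Fin (Fintype.card {x : Fin (Nat.find hP) // x ≠ t})),
        AlmostEquiv A D' A.start D'.start :=
      ⟨mapDFA (mergeDFA D t s hne) e, hAD''⟩
    have hle := Nat.find_min' hP hsmall
    rw [hcard] at hle
    have hn1 : 1 ≤ Nat.find hP := Nat.pos_of_ne_zero fun h0 => (h0 ▸ t).elim0
    omega
  refine ⟨Fin (Nat.find hP), inferInstance, D, hD, ?_, ?_⟩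
  · intro σE _ E hE
    have hsmall : ∃ D' : DFA α (Fin (Fintype.card σE)), AlmostEquiv A D' A.start D'.start :=
      ⟨mapDFA E (Fintype.equivFin σE), almostEquiv_trans hE
        (mapDFA_almostEquiv E (Fintype.equivFin σE) E.start)⟩
    have hle := Nat.find_min' hP hsmall
    rw [Fintype.card_fin]
    exact hle
  · intro s t hst
    by_cases h : s = t
    · subst h
      exact ⟨⟨[], rfl⟩, ⟨[], rfl⟩⟩
    · exact ⟨key s t hst h, key t s (almostEquiv_symm hst) (Ne.symm h)⟩
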